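/- Let A ∈ M_n. Then for each j = 1,…,n, the j-th largest eigenvalue of Re A is at most the j-th largest singular value of A: λ_j(Re A) ≤ σ_j(A). -/

import Mathlib

open Matrix Set ComplexOrder

variable {m : Type*}

/-- The modulus `|X| = (XᴴX)^{1/2}` of a matrix. -/
noncomputable def matAbs [Fintype m] [DecidableEq m] (X : Matrix m m ℂ) : Matrix m m ℂ :=
  (Matrix.posSemidef_conjTranspose_mul_self X).1.eigenvectorUnitary.1 *
    diagonal ((↑) ∘ Real.sqrt ∘ (Matrix.posSemidef_conjTranspose_mul_self X).1.eigenvalues) *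
    (star (Matrix.posSemidef_conjTranspose_mul_self X).1.eigenvectorUnitary : Matrix m m ℂ)

theorem matAbs_posSemidef [Fintype m] [DecidableEq m] (X : Matrix m m ℂ) :
    (matAbs X).PosSemidef := by
  unfold matAbs
  have := (Matrix.PosSemidef.diagonal (n := m) (d := ((↑) ∘ Real.sqrt ∘ (Matrix.posSemidef_conjTranspose_mul_self X).1.eigenvalues : m → ℂ)) ?_).mul_mul_conjTranspose_same ((Matrix.posSemidef_conjTranspose_mul_self X).1.eigenvectorUnitary.1)
  · simpa [Matrix.star_eq_conjTranspose] using this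
  · intro i; simp [Complex.zero_le_real, Real.sqrt_nonneg]

/-- Functional calculus: apply `f : ℝ → ℝ` to a Hermitian matrix via its spectral
decomposition (junk value `0` for non-Hermitian input). -/
noncomputable def matFun [Fintype m] [DecidableEq m] (f : ℝ → ℝ) (X : Matrix m m ℂ) :
    Matrix m m ℂ :=
  if h : X.IsHermitian then
    (h.eigenvectorUnitary : Matrix m m ℂ) *
      Matrix.diagonal (fun i => (f (h.eigenvalues i) : ℂ)) *
      star (h.eigenvectorUnitary : Matrix m m ℂ)
  else 0

/-- Real part `Re A = (A + Aᴴ)/2`. -/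
noncomputable def reM (A : Matrix m m ℂ) : Matrix m m ℂ := (1/2 : ℂ) • (A + Aᴴ)

/-- Imaginary part `Im A = (A - Aᴴ)/(2i)`. -/
noncomputable def imM (A : Matrix m m ℂ) : Matrix m m ℂ := (1/(2*Complex.I)) • (A - Aᴴ)

/-- Numerical range `W(A) = {x* A x : x*x = 1}`. -/
def numRange [Fintype m] (A : Matrix m m ℂ) : Set ℂ :=
  {z | ∃ x : m → ℂ, star x ⬝ᵥ x = 1 ∧ z = star x ⬝ᵥ A.mulVec x}

/-- The sector `S_α = {z : Re z ≥ 0, |Im z| ≤ (Re z) tan α}`. -/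
def sector (α : ℝ) : Set ℂ := {z | 0 ≤ z.re ∧ |z.im| ≤ z.re * Real.tan α}

/-- The `j`-th largest eigenvalue of a Hermitian matrix (junk value `0` otherwise). -/
noncomputable def eigDesc {n : ℕ} (X : Matrix (Fin n) (Fin n) ℂ) : Fin n → ℝ :=
  if h : X.IsHermitian then fun j => h.eigenvalues (Tuple.sort h.eigenvalues j.rev)
  else 0

namespace FanHoffmanAux

variable {n : ℕ}

local notation "E" n => EuclideanSpace ℂ (Fin n)

lemma inner_eq_sum_repr (b : OrthonormalBasis (Fin n) ℂ (EuclideanSpace ℂ (Fin n)))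
    (x y : EuclideanSpace ℂ (Fin n)) :
    (inner ℂ x y : ℂ) = ∑ i, (starRingEnd ℂ) (b.repr x i) * (b.repr y i) := by
  conv_lhs => rw [← b.sum_repr x]
  rw [sum_inner]
  refine Finset.sum_congr rfl fun i _ => ?_
  rw [inner_smul_left]; simp only [← b.repr_apply_apply]

lemma repr_eq_zero_of_mem_span (b : OrthonormalBasis (Fin n) ℂ (EuclideanSpace ℂ (Fin n)))
    (s : Finset (Fin n)) {x : EuclideanSpace ℂ (Fin n)}
    (hx : x ∈ Submodule.span ℂ (b '' ↑s)) {i : Fin n} (hi : i ∉ s) :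
    b.repr x i = 0 := by
  rw [b.repr_apply_apply]
  induction hx using Submodule.span_induction with
  | mem y hy =>
      obtain ⟨k, hk, rfl⟩ := hy
      exact b.orthonormal.2 (fun h => hi (h ▸ hk))
  | zero => simp
  | add y z _ _ hy hz => rw [inner_add_right, hy, hz, add_zero]
  | smul a y _ hy => rw [inner_smul_right, hy, mul_zero]

lemma repr_matrix_apply (M : Matrix (Fin n) (Fin n) ℂ)
    (b : OrthonormalBasis (Fin n) ℂ (EuclideanSpace ℂ (Fin n))) (μ : Fin n → ℝ)
    (hb : ∀ k, Matrix.toEuclideanLin M (b k) = (μ k : ℂ) • b k)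
    (x : EuclideanSpace ℂ (Fin n)) (i : Fin n) :
    b.repr (Matrix.toEuclideanLin M x) i = (μ i : ℂ) * b.repr x i := by
  conv_lhs => rw [← b.sum_repr x, map_sum]
  simp only [_root_.map_smul, hb, smul_smul]
  rw [map_sum]
  simp only [_root_.map_smul, b.repr_self]
  classical
  have happ : ∀ (f : Fin n → EuclideanSpace ℂ (Fin n)),
      (∑ k, f k) i = ∑ k, f k i := fun f => by rw [WithLp.ofLp_sum, Finset.sum_apply]
  rw [happ]
  simp only [PiLp.smul_apply, EuclideanSpace.single_apply, smul_eq_mul, mul_ite, mul_one,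
    mul_zero, Finset.sum_ite_eq, Finset.sum_ite_eq', Finset.mem_univ, if_true]
  ring

lemma re_inner_matrix (M : Matrix (Fin n) (Fin n) ℂ)
    (b : OrthonormalBasis (Fin n) ℂ (EuclideanSpace ℂ (Fin n))) (μ : Fin n → ℝ)
    (hb : ∀ k, Matrix.toEuclideanLin M (b k) = (μ k : ℂ) • b k)
    (x : EuclideanSpace ℂ (Fin n)) :
    (inner ℂ x (Matrix.toEuclideanLin M x) : ℂ).re
      = ∑ i, μ i * Complex.normSq (b.repr x i) := by
  rw [inner_eq_sum_repr b, Complex.re_sum]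
  refine Finset.sum_congr rfl fun i _ => ?_
  rw [repr_matrix_apply M b μ hb]
  have : (starRingEnd ℂ) (b.repr x i) * ((μ i : ℂ) * b.repr x i)
      = (μ i : ℂ) * ((starRingEnd ℂ) (b.repr x i) * b.repr x i) := by ring
  rw [this, mul_comm ((starRingEnd ℂ) (b.repr x i)), Complex.mul_conj]
  simp [← Complex.ofReal_mul]

lemma sum_normSq_repr (b : OrthonormalBasis (Fin n) ℂ (EuclideanSpace ℂ (Fin n)))
    (x : EuclideanSpace ℂ (Fin n)) :
    ∑ i, Complex.normSq (b.repr x i) = ‖x‖ ^ 2 := by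
  have h := inner_eq_sum_repr b x x
  have h2 : (inner ℂ x x : ℂ).re = ‖x‖ ^ 2 := by
    simpa using inner_self_eq_norm_sq (𝕜 := ℂ) x
  rw [h, Complex.re_sum] at h2
  rw [← h2]
  refine Finset.sum_congr rfl fun i _ => ?_
  rw [mul_comm, Complex.mul_conj]
  simp

lemma fan_core (H P : Matrix (Fin n) (Fin n) ℂ)
    (b c : OrthonormalBasis (Fin n) ℂ (EuclideanSpace ℂ (Fin n)))
    (μ s : Fin n → ℝ)
    (hb : ∀ k, Matrix.toEuclideanLin H (b k) = (μ k : ℂ) • b k)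
    (hc : ∀ k, Matrix.toEuclideanLin P (c k) = (s k : ℂ) • c k)
    (hμ : Antitone μ) (hs : Antitone s) (hs0 : ∀ k, 0 ≤ s k)
    (key : ∀ x : EuclideanSpace ℂ (Fin n),
      (inner ℂ x (Matrix.toEuclideanLin H x) : ℂ).re ≤ ‖Matrix.toEuclideanLin P x‖ * ‖x‖)
    (j : Fin n) : μ j ≤ s j := by
  classical
  set S : Submodule ℂ (EuclideanSpace ℂ (Fin n)) :=
    Submodule.span ℂ (b '' ↑(Finset.Iic j)) with hS
  set T : Submodule ℂ (EuclideanSpace ℂ (Fin n)) :=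
    Submodule.span ℂ (c '' ↑(Finset.Ici j)) with hT
  have hbinj : Function.Injective b := b.toBasis.injective
  have hcinj : Function.Injective c := c.toBasis.injective
  have hrankS : Module.finrank ℂ S = (j : ℕ) + 1 := by
    rw [hS, ← Finset.coe_image, ← Fin.card_Iic j,
      ← Finset.card_image_of_injective _ hbinj]
    exact finrank_span_finset_eq_card
      (((linearIndepOn_id_range_iff hbinj).mpr b.orthonormal.linearIndependent).mono
        (fun y hy => by
          obtain ⟨k, -, rfl⟩ := Finset.mem_image.mp (Finset.mem_coe.mp hy)
          exact ⟨k, rfl⟩))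
  have hrankT : Module.finrank ℂ T = n - (j : ℕ) := by
    rw [hT, ← Finset.coe_image, ← Fin.card_Ici j,
      ← Finset.card_image_of_injective _ hcinj]
    exact finrank_span_finset_eq_card
      (((linearIndepOn_id_range_iff hcinj).mpr c.orthonormal.linearIndependent).mono
        (fun y hy => by
          obtain ⟨k, -, rfl⟩ := Finset.mem_image.mp (Finset.mem_coe.mp hy)
          exact ⟨k, rfl⟩))
  have hdim : 0 < Module.finrank ℂ ↥(S ⊓ T) := by
    have h1 := Submodule.finrank_sup_add_finrank_inf_eq S T
    have h2 : Module.finrank ℂ ↥(S ⊔ T) ≤ n := by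
      simpa [finrank_euclideanSpace] using (S ⊔ T).finrank_le
    have hj : (j : ℕ) < n := j.isLt
    omega
  obtain ⟨x0, hx0ne⟩ := Module.finrank_pos_iff_exists_ne_zero.mp hdim
  have hx0S : (x0 : EuclideanSpace ℂ (Fin n)) ∈ S := x0.2.1
  have hx0T : (x0 : EuclideanSpace ℂ (Fin n)) ∈ T := x0.2.2
  have hx0 : (x0 : EuclideanSpace ℂ (Fin n)) ≠ 0 := by
    simpa [Submodule.coe_eq_zero] using hx0ne
  set x : EuclideanSpace ℂ (Fin n) := (‖(x0 : EuclideanSpace ℂ (Fin n))‖⁻¹ : ℂ) • x0 with hxdef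
  have hx1 : ‖x‖ = 1 := norm_smul_inv_norm hx0
  have hxS : x ∈ S := S.smul_mem _ hx0S
  have hxT : x ∈ T := T.smul_mem _ hx0T
  -- lower bound
  have hlow : μ j ≤ (inner ℂ x (Matrix.toEuclideanLin H x) : ℂ).re := by
    rw [re_inner_matrix H b μ hb]
    have hsum : ∑ i, Complex.normSq (b.repr x i) = 1 := by
      rw [sum_normSq_repr, hx1]; norm_num
    calc μ j = μ j * ∑ i, Complex.normSq (b.repr x i) := by rw [hsum, mul_one]
    _ = ∑ i, μ j * Complex.normSq (b.repr x i) := by rw [Finset.mul_sum]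
    _ ≤ ∑ i, μ i * Complex.normSq (b.repr x i) := by
        refine Finset.sum_le_sum fun i _ => ?_
        by_cases hi : i ∈ Finset.Iic j
        · exact mul_le_mul_of_nonneg_right (hμ (Finset.mem_Iic.mp hi)) (Complex.normSq_nonneg _)
        · rw [repr_eq_zero_of_mem_span b _ hxS hi, Complex.normSq_zero, mul_zero, mul_zero]
  -- upper bound
  have hup : ‖Matrix.toEuclideanLin P x‖ ≤ s j := by
    have hnsq : ‖Matrix.toEuclideanLin P x‖ ^ 2 ≤ s j ^ 2 := by
      have h1 : ‖Matrix.toEuclideanLin P x‖ ^ 2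
          = ∑ i, Complex.normSq (c.repr (Matrix.toEuclideanLin P x) i) :=
        (sum_normSq_repr c _).symm
      rw [h1]
      have h2 : ∀ i, Complex.normSq (c.repr (Matrix.toEuclideanLin P x) i)
          = s i ^ 2 * Complex.normSq (c.repr x i) := by
        intro i
        rw [repr_matrix_apply P c s hc, Complex.normSq_mul, Complex.normSq_ofReal, sq]
      simp only [h2]
      have hsum : ∑ i, Complex.normSq (c.repr x i) = 1 := by
        rw [sum_normSq_repr, hx1]; norm_num
      calc ∑ i, s i ^ 2 * Complex.normSq (c.repr x i)
          ≤ ∑ i, s j ^ 2 * Complex.normSq (c.repr x i) := by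
            refine Finset.sum_le_sum fun i _ => ?_
            by_cases hi : i ∈ Finset.Ici j
            · refine mul_le_mul_of_nonneg_right ?_ (Complex.normSq_nonneg _)
              exact pow_le_pow_left₀ (hs0 i) (hs (Finset.mem_Ici.mp hi)) 2
            · rw [repr_eq_zero_of_mem_span c _ hxT hi, Complex.normSq_zero, mul_zero, mul_zero]
      _ = s j ^ 2 := by rw [← Finset.mul_sum, hsum, mul_one]
    nlinarith [norm_nonneg (Matrix.toEuclideanLin P x), hs0 j]
  calc μ j ≤ (inner ℂ x (Matrix.toEuclideanLin H x) : ℂ).re := hlow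
  _ ≤ ‖Matrix.toEuclideanLin P x‖ * ‖x‖ := key x
  _ = ‖Matrix.toEuclideanLin P x‖ := by rw [hx1, mul_one]
  _ ≤ s j := hup

lemma toEuclideanLin_mul_apply (M N : Matrix (Fin n) (Fin n) ℂ)
    (x : EuclideanSpace ℂ (Fin n)) :
    Matrix.toEuclideanLin M (Matrix.toEuclideanLin N x)
      = Matrix.toEuclideanLin (M * N) x := by
  apply (WithLp.equiv 2 (Fin n → ℂ)).injective
  simp [Matrix.toEuclideanLin_apply, Matrix.mulVec_mulVec]

lemma norm_toEuclideanLin_abs (A : Matrix (Fin n) (Fin n) ℂ)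
    (x : EuclideanSpace ℂ (Fin n)) :
    ‖Matrix.toEuclideanLin (matAbs A) x‖ = ‖Matrix.toEuclideanLin A x‖ := by
  have hP : (matAbs A).IsHermitian := (matAbs_posSemidef A).isHermitian
  have hPP : matAbs A * matAbs A = Aᴴ * A :=
    by
      have hh := (Matrix.posSemidef_conjTranspose_mul_self A).1
      have hU : (star hh.eigenvectorUnitary.1 : Matrix (Fin n) (Fin n) ℂ) * hh.eigenvectorUnitary.1 = 1 :=
        Unitary.star_mul_self_of_mem hh.eigenvectorUnitary.2
      have hD : diagonal ((↑) ∘ Real.sqrt ∘ hh.eigenvalues : Fin n → ℂ) *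
          diagonal ((↑) ∘ Real.sqrt ∘ hh.eigenvalues) = diagonal (RCLike.ofReal ∘ hh.eigenvalues) := by
        rw [diagonal_mul_diagonal]; congr 1; funext i
        simp [← Complex.ofReal_mul,
          Real.mul_self_sqrt ((Matrix.posSemidef_conjTranspose_mul_self A).eigenvalues_nonneg i)]
      conv_rhs => rw [hh.spectral_theorem, Unitary.conjStarAlgAut_apply]
      unfold matAbs
      rw [← hD]
      simp only [Matrix.mul_assoc]
      rw [← Matrix.mul_assoc (star _) _ (Matrix.diagonal _ * _), hU, Matrix.one_mul]
  have h1 : ∀ (M : Matrix (Fin n) (Fin n) ℂ),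
      ‖Matrix.toEuclideanLin M x‖ ^ 2
        = (inner ℂ x (Matrix.toEuclideanLin (Mᴴ * M) x) : ℂ).re := by
    intro M
    rw [← toEuclideanLin_mul_apply, Matrix.toEuclideanLin_conjTranspose_eq_adjoint,
      LinearMap.adjoint_inner_right]
    have := inner_self_eq_norm_sq (𝕜 := ℂ) (Matrix.toEuclideanLin M x)
    simpa using this.symm
  have h2 : ‖Matrix.toEuclideanLin (matAbs A) x‖ ^ 2 = ‖Matrix.toEuclideanLin A x‖ ^ 2 := by
    rw [h1, h1]
    congr 2
    rw [hP.eq, hPP]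
  have := congrArg Real.sqrt h2
  rwa [Real.sqrt_sq (norm_nonneg _), Real.sqrt_sq (norm_nonneg _)] at this

lemma key_ineq (A : Matrix (Fin n) (Fin n) ℂ) (x : EuclideanSpace ℂ (Fin n)) :
    (inner ℂ x (Matrix.toEuclideanLin (reM A) x) : ℂ).re
      ≤ ‖Matrix.toEuclideanLin (matAbs A) x‖ * ‖x‖ := by
  set z : ℂ := inner ℂ x (Matrix.toEuclideanLin A x) with hz
  have hre : (inner ℂ x (Matrix.toEuclideanLin (reM A) x) : ℂ).re = z.re := by
    have hTH : Matrix.toEuclideanLin (reM A) x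
        = (1/2 : ℂ) • (Matrix.toEuclideanLin A x + Matrix.toEuclideanLin Aᴴ x) := by
      rw [reM, _root_.map_smul]
      simp [_root_.map_add]
    rw [hTH, inner_smul_right, inner_add_right]
    have hadj : (inner ℂ x (Matrix.toEuclideanLin Aᴴ x) : ℂ) = (starRingEnd ℂ) z := by
      rw [Matrix.toEuclideanLin_conjTranspose_eq_adjoint, LinearMap.adjoint_inner_right,
        ← inner_conj_symm, hz]
    rw [hadj, ← hz, Complex.add_conj]
    simp
  rw [hre, norm_toEuclideanLin_abs]
  calc z.re ≤ ‖z‖ := Complex.re_le_norm z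
  _ = ‖z‖ := rfl
  _ ≤ ‖x‖ * ‖Matrix.toEuclideanLin A x‖ := norm_inner_le_norm x _
  _ = ‖Matrix.toEuclideanLin A x‖ * ‖x‖ := mul_comm _ _

lemma toEuclideanLin_eigenvectorBasis {A : Matrix (Fin n) (Fin n) ℂ}
    (hA : A.IsHermitian) (k : Fin n) :
    Matrix.toEuclideanLin A (hA.eigenvectorBasis k)
      = (hA.eigenvalues k : ℂ) • hA.eigenvectorBasis k := by
  have h := hA.mulVec_eigenvectorBasis k
  apply (WithLp.equiv 2 (Fin n → ℂ)).injective
  simpa [Matrix.toEuclideanLin_apply] using h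

lemma reM_isHermitian (A : Matrix m m ℂ) [Fintype m] : (reM A).IsHermitian := by
  unfold reM Matrix.IsHermitian
  rw [conjTranspose_smul, conjTranspose_add, conjTranspose_conjTranspose]
  rw [add_comm]
  congr 1
  simp [Complex.ext_iff]

end FanHoffmanAux

open FanHoffmanAux in
theorem fan_hoffman {n : ℕ} (A : Matrix (Fin n) (Fin n) ℂ) (j : Fin n) :
    eigDesc (reM A) j ≤ eigDesc (matAbs A) j := by
  have hH : (reM A).IsHermitian := reM_isHermitian A
  have hP : (matAbs A).IsHermitian := (matAbs_posSemidef A).isHermitian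
  set σH := Tuple.sort hH.eigenvalues with hσH
  set σP := Tuple.sort hP.eigenvalues with hσP
  set b := hH.eigenvectorBasis.reindex ((Fin.revPerm.trans (σH : Equiv.Perm (Fin n))).symm)
    with hbdef
  set c := hP.eigenvectorBasis.reindex ((Fin.revPerm.trans (σP : Equiv.Perm (Fin n))).symm)
    with hcdef
  set μ : Fin n → ℝ := fun k => hH.eigenvalues (σH (Fin.rev k)) with hμdef
  set s : Fin n → ℝ := fun k => hP.eigenvalues (σP (Fin.rev k)) with hsdef
  have hbk : ∀ k, b k = hH.eigenvectorBasis (σH (Fin.rev k)) := fun k => by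
    rw [hbdef, OrthonormalBasis.reindex_apply]; rfl
  have hck : ∀ k, c k = hP.eigenvectorBasis (σP (Fin.rev k)) := fun k => by
    rw [hcdef, OrthonormalBasis.reindex_apply]; rfl
  have hb : ∀ k, Matrix.toEuclideanLin (reM A) (b k) = (μ k : ℂ) • b k := fun k => by
    rw [hbk k]; exact toEuclideanLin_eigenvectorBasis hH _
  have hc : ∀ k, Matrix.toEuclideanLin (matAbs A) (c k) = (s k : ℂ) • c k := fun k => by
    rw [hck k]; exact toEuclideanLin_eigenvectorBasis hP _
  have hμa : Antitone μ := fun k l hkl =>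
    Tuple.monotone_sort hH.eigenvalues (Fin.rev_le_rev.mpr hkl)
  have hsa : Antitone s := fun k l hkl =>
    Tuple.monotone_sort hP.eigenvalues (Fin.rev_le_rev.mpr hkl)
  have hs0 : ∀ k, 0 ≤ s k := fun k => (matAbs_posSemidef A).eigenvalues_nonneg _
  have h1 : eigDesc (reM A) j = μ j := by rw [eigDesc, dif_pos hH]
  have h2 : eigDesc (matAbs A) j = s j := by rw [eigDesc, dif_pos hP]
  rw [h1, h2]
  exact fan_core (reM A) (matAbs A) b c μ s hb hc hμa hsa hs0
    (fun x => key_ineq A x) j
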